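/- With the hypotheses of the PIAA propagation theorem—Fermat stationarity ∂Q/∂x|_(x_i,y_i) = 0, the mirror equation (∂h/∂x)·Q = f₁ − x, and Q(x_i,y_i) = Q₀ with S₀ the free-space distance along the ray—one obtains ∂²Q/∂x²|_(x_i,y_i) = (1/S₀)·∂f₁/∂x|_(x_i,y_i). Similarly ∂²Q/∂x∂y|_(x_i,y_i) = (1/S₀)·∂f₁/∂y|_(x_i,y_i) = (1/S₀)·∂f₂/∂x|_(x_i,y_i), and ∂²Q/∂y²|_(x_i,y_i) = (1/S₀)·∂f₂/∂y|_(x_i,y_i). -/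

import Mathlib

noncomputable def pdx (φ : ℝ × ℝ → ℝ) (p : ℝ × ℝ) : ℝ :=
  deriv (fun t => φ (t, p.2)) p.1

noncomputable def pdy (φ : ℝ × ℝ → ℝ) (p : ℝ × ℝ) : ℝ :=
  deriv (fun t => φ (p.1, t)) p.2

noncomputable def Hx (h : ℝ × ℝ → ℝ) (p : ℝ × ℝ) : ℝ := fderiv ℝ h p (1, 0)
noncomputable def Hy (h : ℝ × ℝ → ℝ) (p : ℝ × ℝ) : ℝ := fderiv ℝ h p (0, 1)

noncomputable def gg (h : ℝ × ℝ → ℝ) (xt yt ct : ℝ) (p : ℝ × ℝ) : ℝ :=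
  (p.1 - xt)^2 + (p.2 - yt)^2 + (h p - ct)^2

noncomputable def ss (h : ℝ × ℝ → ℝ) (xt yt ct : ℝ) (p : ℝ × ℝ) : ℝ :=
  Real.sqrt (gg h xt yt ct p)

noncomputable def FF (h : ℝ × ℝ → ℝ) (xt yt ct : ℝ) (p : ℝ × ℝ) : ℝ :=
  ss h xt yt ct p + h p - ct

noncomputable def PhiX (h : ℝ × ℝ → ℝ) (xt yt ct : ℝ) (p : ℝ × ℝ) : ℝ :=
  ((p.1 - xt) + (h p - ct) * Hx h p) / ss h xt yt ct p + Hx h p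

noncomputable def PhiY (h : ℝ × ℝ → ℝ) (xt yt ct : ℝ) (p : ℝ × ℝ) : ℝ :=
  ((p.2 - yt) + (h p - ct) * Hy h p) / ss h xt yt ct p + Hy h p

lemma lineX (x y : ℝ) : HasDerivAt (fun t => ((t, y) : ℝ × ℝ)) (1, 0) x :=
  (hasDerivAt_id x).prodMk (hasDerivAt_const x y)

lemma lineY (x y : ℝ) : HasDerivAt (fun t => ((x, t) : ℝ × ℝ)) (0, 1) y :=
  (hasDerivAt_const y x).prodMk (hasDerivAt_id y)

variable {h : ℝ × ℝ → ℝ} {xt yt ct : ℝ}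

lemma hx_slice (hh : ContDiff ℝ 2 h) (p : ℝ × ℝ) :
    HasDerivAt (fun t => h (t, p.2)) (Hx h p) p.1 :=
  ((hh.differentiable two_ne_zero p).hasFDerivAt).comp_hasDerivAt _ (lineX p.1 p.2)

lemma hy_slice (hh : ContDiff ℝ 2 h) (p : ℝ × ℝ) :
    HasDerivAt (fun t => h (p.1, t)) (Hy h p) p.2 :=
  ((hh.differentiable two_ne_zero p).hasFDerivAt).comp_hasDerivAt _ (lineY p.1 p.2)

lemma gg_sliceX (hh : ContDiff ℝ 2 h) (p : ℝ × ℝ) :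
    HasDerivAt (fun t => gg h xt yt ct (t, p.2))
      (2*(p.1 - xt) + 2*(h p - ct) * Hx h p) p.1 := by
  have d1 : HasDerivAt (fun t : ℝ => (t - xt)^2) (2*(p.1 - xt)) p.1 := by
    simpa using ((hasDerivAt_id p.1).sub_const xt).fun_pow 2
  have d3 : HasDerivAt (fun t => (h (t, p.2) - ct)^2) (2*(h p - ct) * Hx h p) p.1 := by
    have := (((hx_slice hh p).sub_const ct).fun_pow 2)
    convert this using 1
    all_goals first | rfl | (push_cast; ring)
  exact (d1.add_const ((p.2 - yt)^2)).add d3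

lemma gg_sliceY (hh : ContDiff ℝ 2 h) (p : ℝ × ℝ) :
    HasDerivAt (fun t => gg h xt yt ct (p.1, t))
      (2*(p.2 - yt) + 2*(h p - ct) * Hy h p) p.2 := by
  have d1 : HasDerivAt (fun t : ℝ => (p.1 - xt)^2 + (t - yt)^2) (2*(p.2 - yt)) p.2 := by
    simpa using (((hasDerivAt_id p.2).sub_const yt).fun_pow 2).const_add ((p.1 - xt)^2)
  have d3 : HasDerivAt (fun t => (h (p.1, t) - ct)^2) (2*(h p - ct) * Hy h p) p.2 := by
    have := (((hy_slice hh p).sub_const ct).fun_pow 2)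
    convert this using 1
    all_goals first | rfl | (push_cast; ring)
  exact d1.add d3

lemma ss_sliceX (hh : ContDiff ℝ 2 h) {p : ℝ × ℝ} (hg : 0 < gg h xt yt ct p) :
    HasDerivAt (fun t => ss h xt yt ct (t, p.2))
      (((p.1 - xt) + (h p - ct) * Hx h p) / ss h xt yt ct p) p.1 := by
  have hs : ss h xt yt ct p ≠ 0 := (Real.sqrt_pos.mpr hg).ne'
  have h2 := (Real.hasDerivAt_sqrt hg.ne').comp p.1 (gg_sliceX hh p)
  have h3 : HasDerivAt (fun t => ss h xt yt ct (t, p.2))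
      (1 / (2 * ss h xt yt ct p) * (2*(p.1 - xt) + 2*(h p - ct) * Hx h p)) p.1 := h2
  convert h3 using 1
  field_simp

lemma ss_sliceY (hh : ContDiff ℝ 2 h) {p : ℝ × ℝ} (hg : 0 < gg h xt yt ct p) :
    HasDerivAt (fun t => ss h xt yt ct (p.1, t))
      (((p.2 - yt) + (h p - ct) * Hy h p) / ss h xt yt ct p) p.2 := by
  have hs : ss h xt yt ct p ≠ 0 := (Real.sqrt_pos.mpr hg).ne'
  have h2 := (Real.hasDerivAt_sqrt hg.ne').comp p.2 (gg_sliceY hh p)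
  have h3 : HasDerivAt (fun t => ss h xt yt ct (p.1, t))
      (1 / (2 * ss h xt yt ct p) * (2*(p.2 - yt) + 2*(h p - ct) * Hy h p)) p.2 := h2
  convert h3 using 1
  field_simp

lemma FF_sliceX (hh : ContDiff ℝ 2 h) {p : ℝ × ℝ} (hg : 0 < gg h xt yt ct p) :
    HasDerivAt (fun t => FF h xt yt ct (t, p.2)) (PhiX h xt yt ct p) p.1 :=
  ((ss_sliceX hh hg).add (hx_slice hh p)).sub_const ct

lemma FF_sliceY (hh : ContDiff ℝ 2 h) {p : ℝ × ℝ} (hg : 0 < gg h xt yt ct p) :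
    HasDerivAt (fun t => FF h xt yt ct (p.1, t)) (PhiY h xt yt ct p) p.2 :=
  ((ss_sliceY hh hg).add (hy_slice hh p)).sub_const ct

lemma pdx_FF (hh : ContDiff ℝ 2 h) {p : ℝ × ℝ} (hg : 0 < gg h xt yt ct p) :
    pdx (FF h xt yt ct) p = PhiX h xt yt ct p := (FF_sliceX hh hg).deriv

lemma pdy_FF (hh : ContDiff ℝ 2 h) {p : ℝ × ℝ} (hg : 0 < gg h xt yt ct p) :
    pdy (FF h xt yt ct) p = PhiY h xt yt ct p := (FF_sliceY hh hg).deriv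

lemma gg_cont (hh : ContDiff ℝ 2 h) : Continuous (gg h xt yt ct) := by
  unfold gg
  exact (((continuous_fst.sub continuous_const).pow 2).add
    ((continuous_snd.sub continuous_const).pow 2)).add
    ((hh.continuous.sub continuous_const).pow 2)
theorem stmt_8 (h ht f₁ f₂ : ℝ × ℝ → ℝ)
    (hh : ContDiff ℝ 2 h) (hht : ContDiff ℝ 2 ht)
    (hf₁ : ContDiff ℝ 1 f₁) (hf₂ : ContDiff ℝ 1 f₂)
    (S Q : ℝ × ℝ → ℝ × ℝ → ℝ)
    (hS : ∀ p q : ℝ × ℝ, S p q =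
      Real.sqrt ((p.1 - q.1)^2 + (p.2 - q.2)^2 + (h p - ht q)^2))
    (hQ : ∀ p q : ℝ × ℝ, Q p q = S p q + h p - ht q)
    (Q₀ : ℝ)
    (hmirror1 : ∀ p : ℝ × ℝ, pdx h p * Q p (f₁ p, f₂ p) = f₁ p - p.1)
    (hmirror2 : ∀ p : ℝ × ℝ, pdy h p * Q p (f₁ p, f₂ p) = f₂ p - p.2)
    (hconst : ∀ p : ℝ × ℝ, Q p (f₁ p, f₂ p) = Q₀)
    (xt yt : ℝ) (pᵢ : ℝ × ℝ)
    (hray : f₁ pᵢ = xt ∧ f₂ pᵢ = yt)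
    (hstatx : pdx (fun p => Q p (xt, yt)) pᵢ = 0)
    (hstaty : pdy (fun p => Q p (xt, yt)) pᵢ = 0)
    (S₀ : ℝ) (hS₀ : S₀ = S pᵢ (xt, yt)) (hS₀pos : 0 < S₀) :
    pdx (pdx (fun p => Q p (xt, yt))) pᵢ = (1 / S₀) * pdx f₁ pᵢ ∧
    pdy (pdx (fun p => Q p (xt, yt))) pᵢ = (1 / S₀) * pdy f₁ pᵢ ∧
    pdy (pdx (fun p => Q p (xt, yt))) pᵢ = (1 / S₀) * pdx f₂ pᵢ ∧
    pdy (pdy (fun p => Q p (xt, yt))) pᵢ = (1 / S₀) * pdy f₂ pᵢ := by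
  obtain ⟨hrx, hry⟩ := hray
  set ct := ht (xt, yt) with hct
  -- the fixed-target optical path equals FF
  have hFQ : (fun p => Q p (xt, yt)) = FF h xt yt ct := by
    funext p
    rw [hQ, hS]
    rfl
  -- basic positivity
  have hsS : ss h xt yt ct pᵢ = S₀ := by rw [hS₀, hS]; rfl
  have hspos : 0 < ss h xt yt ct pᵢ := hsS ▸ hS₀pos
  have hgpos : 0 < gg h xt yt ct pᵢ := Real.sqrt_pos.mp hspos
  have hsne : ss h xt yt ct pᵢ ≠ 0 := hspos.ne'
  -- Q₀ relation
  have hQ0 : Q₀ = ss h xt yt ct pᵢ + (h pᵢ - ct) := by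
    have := hconst pᵢ
    rw [hrx, hry, hQ, hS] at this
    rw [← this, hct]
    show _ = ss h xt yt ct pᵢ + (h pᵢ - ht (xt, yt))
    unfold ss gg
    ring
  -- pdx/pdy of h are Hx/Hy
  have hpdxh : ∀ p : ℝ × ℝ, pdx h p = Hx h p := fun p => (hx_slice hh p).deriv
  have hpdyh : ∀ p : ℝ × ℝ, pdy h p = Hy h p := fun p => (hy_slice hh p).deriv
  -- global mirror identities
  have m1 : ∀ p : ℝ × ℝ, f₁ p = Hx h p * Q₀ + p.1 := by
    intro p
    have := hmirror1 p
    rw [hconst p, hpdxh p] at this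
    linarith
  have m2 : ∀ p : ℝ × ℝ, f₂ p = Hy h p * Q₀ + p.2 := by
    intro p
    have := hmirror2 p
    rw [hconst p, hpdyh p] at this
    linarith
  -- second derivative of h
  have hfd : DifferentiableAt ℝ (fderiv ℝ h) pᵢ :=
    ((hh.fderiv_right (le_refl 2)).differentiable one_ne_zero) pᵢ
  set B := fderiv ℝ (fderiv ℝ h) pᵢ with hB
  have dHxX : HasDerivAt (fun t => Hx h (t, pᵢ.2)) (B (1, 0) (1, 0)) pᵢ.1 := by
    have d0 : HasDerivAt (fun t => fderiv ℝ h (t, pᵢ.2)) (B (1, 0)) pᵢ.1 :=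
      hfd.hasFDerivAt.comp_hasDerivAt _ (lineX pᵢ.1 pᵢ.2)
    simpa [Hx] using d0.clm_apply (hasDerivAt_const pᵢ.1 ((1 : ℝ), (0 : ℝ)))
  have dHxY : HasDerivAt (fun t => Hx h (pᵢ.1, t)) (B (0, 1) (1, 0)) pᵢ.2 := by
    have d0 : HasDerivAt (fun t => fderiv ℝ h (pᵢ.1, t)) (B (0, 1)) pᵢ.2 :=
      hfd.hasFDerivAt.comp_hasDerivAt _ (lineY pᵢ.1 pᵢ.2)
    simpa [Hx] using d0.clm_apply (hasDerivAt_const pᵢ.2 ((1 : ℝ), (0 : ℝ)))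
  have dHyX : HasDerivAt (fun t => Hy h (t, pᵢ.2)) (B (1, 0) (0, 1)) pᵢ.1 := by
    have d0 : HasDerivAt (fun t => fderiv ℝ h (t, pᵢ.2)) (B (1, 0)) pᵢ.1 :=
      hfd.hasFDerivAt.comp_hasDerivAt _ (lineX pᵢ.1 pᵢ.2)
    simpa [Hy] using d0.clm_apply (hasDerivAt_const pᵢ.1 ((0 : ℝ), (1 : ℝ)))
  have dHyY : HasDerivAt (fun t => Hy h (pᵢ.1, t)) (B (0, 1) (0, 1)) pᵢ.2 := by
    have d0 : HasDerivAt (fun t => fderiv ℝ h (pᵢ.1, t)) (B (0, 1)) pᵢ.2 :=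
      hfd.hasFDerivAt.comp_hasDerivAt _ (lineY pᵢ.1 pᵢ.2)
    simpa [Hy] using d0.clm_apply (hasDerivAt_const pᵢ.2 ((0 : ℝ), (1 : ℝ)))
  have hsymm : B (0, 1) (1, 0) = B (1, 0) (0, 1) :=
    second_derivative_symmetric (fun y => (hh.differentiable two_ne_zero y).hasFDerivAt)
      hfd.hasFDerivAt (0, 1) (1, 0)
  -- derivatives of f along slices
  have df1x : pdx f₁ pᵢ = B (1, 0) (1, 0) * Q₀ + 1 := by
    show deriv (fun t => f₁ (t, pᵢ.2)) pᵢ.1 = _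
    have he : (fun t => f₁ (t, pᵢ.2)) = fun t => Hx h (t, pᵢ.2) * Q₀ + t :=
      funext fun t => m1 (t, pᵢ.2)
    rw [he]
    exact ((dHxX.mul_const Q₀).add (hasDerivAt_id pᵢ.1)).deriv
  have df1y : pdy f₁ pᵢ = B (0, 1) (1, 0) * Q₀ := by
    show deriv (fun t => f₁ (pᵢ.1, t)) pᵢ.2 = _
    have he : (fun t => f₁ (pᵢ.1, t)) = fun t => Hx h (pᵢ.1, t) * Q₀ + pᵢ.1 :=
      funext fun t => m1 (pᵢ.1, t)
    rw [he]
    exact ((dHxY.mul_const Q₀).add_const pᵢ.1).deriv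
  have df2x : pdx f₂ pᵢ = B (1, 0) (0, 1) * Q₀ := by
    show deriv (fun t => f₂ (t, pᵢ.2)) pᵢ.1 = _
    have he : (fun t => f₂ (t, pᵢ.2)) = fun t => Hy h (t, pᵢ.2) * Q₀ + pᵢ.2 :=
      funext fun t => m2 (t, pᵢ.2)
    rw [he]
    exact ((dHyX.mul_const Q₀).add_const pᵢ.2).deriv
  have df2y : pdy f₂ pᵢ = B (0, 1) (0, 1) * Q₀ + 1 := by
    show deriv (fun t => f₂ (pᵢ.1, t)) pᵢ.2 = _
    have he : (fun t => f₂ (pᵢ.1, t)) = fun t => Hy h (pᵢ.1, t) * Q₀ + t :=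
      funext fun t => m2 (pᵢ.1, t)
    rw [he]
    exact ((dHyY.mul_const Q₀).add (hasDerivAt_id pᵢ.2)).deriv
  -- stationarity: closed forms for N and M
  have hstx' : PhiX h xt yt ct pᵢ = 0 := by
    rw [← pdx_FF hh hgpos, ← hFQ]; exact hstatx
  have hsty' : PhiY h xt yt ct pᵢ = 0 := by
    rw [← pdy_FF hh hgpos, ← hFQ]; exact hstaty
  have nx : (pᵢ.1 - xt) + (h pᵢ - ct) * Hx h pᵢ = -(Hx h pᵢ) * ss h xt yt ct pᵢ := by
    unfold PhiX at hstx'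
    have h1 : ((pᵢ.1 - xt) + (h pᵢ - ct) * Hx h pᵢ) / ss h xt yt ct pᵢ = -(Hx h pᵢ) := by
      linarith
    exact (div_eq_iff hsne).mp h1
  have ny : (pᵢ.2 - yt) + (h pᵢ - ct) * Hy h pᵢ = -(Hy h pᵢ) * ss h xt yt ct pᵢ := by
    unfold PhiY at hsty'
    have h1 : ((pᵢ.2 - yt) + (h pᵢ - ct) * Hy h pᵢ) / ss h xt yt ct pᵢ = -(Hy h pᵢ) := by
      linarith
    exact (div_eq_iff hsne).mp h1
  -- slice derivatives of numerator N along x and y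
  have dNX : HasDerivAt (fun t => ((t - xt) + (h (t, pᵢ.2) - ct) * Hx h (t, pᵢ.2)))
      (1 + (Hx h pᵢ * Hx h pᵢ + (h pᵢ - ct) * B (1, 0) (1, 0))) pᵢ.1 :=
    ((hasDerivAt_id pᵢ.1).sub_const xt).add
      (((hx_slice hh pᵢ).sub_const ct).mul dHxX)
  have dNY : HasDerivAt (fun t => ((pᵢ.1 - xt) + (h (pᵢ.1, t) - ct) * Hx h (pᵢ.1, t)))
      (0 + (Hy h pᵢ * Hx h pᵢ + (h pᵢ - ct) * B (0, 1) (1, 0))) pᵢ.2 :=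
    (hasDerivAt_const pᵢ.2 (pᵢ.1 - xt)).add
      (((hy_slice hh pᵢ).sub_const ct).mul dHxY)
  have dMY : HasDerivAt (fun t => ((t - yt) + (h (pᵢ.1, t) - ct) * Hy h (pᵢ.1, t)))
      (1 + (Hy h pᵢ * Hy h pᵢ + (h pᵢ - ct) * B (0, 1) (0, 1))) pᵢ.2 :=
    ((hasDerivAt_id pᵢ.2).sub_const yt).add
      (((hy_slice hh pᵢ).sub_const ct).mul dHyY)
  -- derivative of PhiX along x-slice
  have dPhiXX : HasDerivAt (fun t => PhiX h xt yt ct (t, pᵢ.2))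
      (((1 + (Hx h pᵢ * Hx h pᵢ + (h pᵢ - ct) * B (1, 0) (1, 0))) * ss h xt yt ct pᵢ -
        ((pᵢ.1 - xt) + (h pᵢ - ct) * Hx h pᵢ) *
          (((pᵢ.1 - xt) + (h pᵢ - ct) * Hx h pᵢ) / ss h xt yt ct pᵢ)) / ss h xt yt ct pᵢ ^ 2 +
        B (1, 0) (1, 0)) pᵢ.1 :=
    (dNX.div (ss_sliceX hh hgpos) hsne).add dHxX
  have dPhiXY : HasDerivAt (fun t => PhiX h xt yt ct (pᵢ.1, t))
      (((0 + (Hy h pᵢ * Hx h pᵢ + (h pᵢ - ct) * B (0, 1) (1, 0))) * ss h xt yt ct pᵢ -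
        ((pᵢ.1 - xt) + (h pᵢ - ct) * Hx h pᵢ) *
          (((pᵢ.2 - yt) + (h pᵢ - ct) * Hy h pᵢ) / ss h xt yt ct pᵢ)) / ss h xt yt ct pᵢ ^ 2 +
        B (0, 1) (1, 0)) pᵢ.2 :=
    (dNY.div (ss_sliceY hh hgpos) hsne).add dHxY
  have dPhiYY : HasDerivAt (fun t => PhiY h xt yt ct (pᵢ.1, t))
      (((1 + (Hy h pᵢ * Hy h pᵢ + (h pᵢ - ct) * B (0, 1) (0, 1))) * ss h xt yt ct pᵢ -
        ((pᵢ.2 - yt) + (h pᵢ - ct) * Hy h pᵢ) *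
          (((pᵢ.2 - yt) + (h pᵢ - ct) * Hy h pᵢ) / ss h xt yt ct pᵢ)) / ss h xt yt ct pᵢ ^ 2 +
        B (0, 1) (0, 1)) pᵢ.2 :=
    (dMY.div (ss_sliceY hh hgpos) hsne).add dHyY
  -- eventual equality of pdx FF / pdy FF with PhiX / PhiY near pᵢ
  have hevX : ∀ᶠ t in nhds pᵢ.1, 0 < gg h xt yt ct (t, pᵢ.2) := by
    have hc : ContinuousAt (fun t => gg h xt yt ct (t, pᵢ.2)) pᵢ.1 :=
      (gg_cont hh).continuousAt.comp ((continuous_id.prodMk continuous_const).continuousAt)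
    exact hc.eventually_mem (isOpen_Ioi.mem_nhds hgpos) |>.mono fun t ht => ht
  have hevY : ∀ᶠ t in nhds pᵢ.2, 0 < gg h xt yt ct (pᵢ.1, t) := by
    have hc : ContinuousAt (fun t => gg h xt yt ct (pᵢ.1, t)) pᵢ.2 :=
      (gg_cont hh).continuousAt.comp ((continuous_const.prodMk continuous_id).continuousAt)
    exact hc.eventually_mem (isOpen_Ioi.mem_nhds hgpos) |>.mono fun t ht => ht
  have E1 : pdx (pdx (FF h xt yt ct)) pᵢ =
      ((1 + (Hx h pᵢ * Hx h pᵢ + (h pᵢ - ct) * B (1, 0) (1, 0))) * ss h xt yt ct pᵢ -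
        ((pᵢ.1 - xt) + (h pᵢ - ct) * Hx h pᵢ) *
          (((pᵢ.1 - xt) + (h pᵢ - ct) * Hx h pᵢ) / ss h xt yt ct pᵢ)) / ss h xt yt ct pᵢ ^ 2 +
        B (1, 0) (1, 0) := by
    have hev : (fun t => pdx (FF h xt yt ct) (t, pᵢ.2)) =ᶠ[nhds pᵢ.1]
        (fun t => PhiX h xt yt ct (t, pᵢ.2)) :=
      hevX.mono fun t ht => pdx_FF hh ht
    show deriv (fun t => pdx (FF h xt yt ct) (t, pᵢ.2)) pᵢ.1 = _
    rw [hev.deriv_eq]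
    exact dPhiXX.deriv
  have E2 : pdy (pdx (FF h xt yt ct)) pᵢ =
      ((0 + (Hy h pᵢ * Hx h pᵢ + (h pᵢ - ct) * B (0, 1) (1, 0))) * ss h xt yt ct pᵢ -
        ((pᵢ.1 - xt) + (h pᵢ - ct) * Hx h pᵢ) *
          (((pᵢ.2 - yt) + (h pᵢ - ct) * Hy h pᵢ) / ss h xt yt ct pᵢ)) / ss h xt yt ct pᵢ ^ 2 +
        B (0, 1) (1, 0) := by
    have hev : (fun t => pdx (FF h xt yt ct) (pᵢ.1, t)) =ᶠ[nhds pᵢ.2]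
        (fun t => PhiX h xt yt ct (pᵢ.1, t)) :=
      hevY.mono fun t ht => pdx_FF hh ht
    show deriv (fun t => pdx (FF h xt yt ct) (pᵢ.1, t)) pᵢ.2 = _
    rw [hev.deriv_eq]
    exact dPhiXY.deriv
  have E4 : pdy (pdy (FF h xt yt ct)) pᵢ =
      ((1 + (Hy h pᵢ * Hy h pᵢ + (h pᵢ - ct) * B (0, 1) (0, 1))) * ss h xt yt ct pᵢ -
        ((pᵢ.2 - yt) + (h pᵢ - ct) * Hy h pᵢ) *
          (((pᵢ.2 - yt) + (h pᵢ - ct) * Hy h pᵢ) / ss h xt yt ct pᵢ)) / ss h xt yt ct pᵢ ^ 2 +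
        B (0, 1) (0, 1) := by
    have hev : (fun t => pdy (FF h xt yt ct) (pᵢ.1, t)) =ᶠ[nhds pᵢ.2]
        (fun t => PhiY h xt yt ct (pᵢ.1, t)) :=
      hevY.mono fun t ht => pdy_FF hh ht
    show deriv (fun t => pdy (FF h xt yt ct) (pᵢ.1, t)) pᵢ.2 = _
    rw [hev.deriv_eq]
    exact dPhiYY.deriv
  rw [hFQ, ← hsS]
  refine ⟨?_, ?_, ?_, ?_⟩
  · rw [E1, df1x, nx, hQ0]
    field_simp
    ring
  · rw [E2, df1y, nx, ny, hQ0]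
    field_simp
    ring
  · rw [E2, df2x, ← hsymm, nx, ny, hQ0]
    field_simp
    ring
  · rw [E4, df2y, ny, hQ0]
    field_simp
    ring
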